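/- Let (\Pi, \mu) be an irreducible reversible Markov chain on a finite state space X with spectral gap \lambda_1 > 0. If F : X \to \mathbb{R} satisfies the triple-norm bound (1/2) \sup_{x} \sum_{y} |F(x) - F(y)|^2 \Pi(x,y) \le 1, then for every r \ge 0, \mu(\{x : F(x) \ge \int F d\mu + r\}) \le 3 e^{-r \sqrt{\lambda_1}/2}. -/

import Mathlib

open Finset

private lemma exp_half_sq_le (a b : ℝ) (h : b ≤ a) :
    (Real.exp (a/2) - Real.exp (b/2))^2 ≤ (a-b)^2/4 * Real.exp a := by
  have e1 : Real.exp (a/2) * Real.exp (a/2) = Real.exp a := by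
    rw [← Real.exp_add]; ring_nf
  have h2 : 0 ≤ Real.exp (a/2) - Real.exp (b/2) :=
    sub_nonneg.2 (Real.exp_le_exp.2 (by linarith))
  have e2 : Real.exp (a/2) * Real.exp ((b-a)/2) = Real.exp (b/2) := by
    rw [← Real.exp_add]; ring_nf
  have h3 : Real.exp (a/2) - Real.exp (b/2) ≤ Real.exp (a/2) * ((a-b)/2) := by
    nlinarith [Real.add_one_le_exp ((b-a)/2), Real.exp_pos (a/2)]
  have h4 : (Real.exp (a/2) - Real.exp (b/2))^2 ≤ (Real.exp (a/2) * ((a-b)/2))^2 :=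
    pow_le_pow_left₀ h2 h3 2
  calc (Real.exp (a/2) - Real.exp (b/2))^2 ≤ (Real.exp (a/2) * ((a-b)/2))^2 := h4
    _ = (a-b)^2/4 * (Real.exp (a/2) * Real.exp (a/2)) := by ring
    _ = (a-b)^2/4 * Real.exp a := by rw [e1]

private lemma exp_sq_ineq (a b : ℝ) :
    (Real.exp (a/2) - Real.exp (b/2))^2 ≤ (a-b)^2/4 * (Real.exp a + Real.exp b) := by
  rcases le_total b a with h | h
  · have := exp_half_sq_le a b h
    nlinarith [Real.exp_pos b, sq_nonneg (a-b)]
  · have := exp_half_sq_le b a h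
    nlinarith [Real.exp_pos a, sq_nonneg (a-b)]

private lemma exp_quadratic_bound (u : ℝ) (hu : |u| ≤ 1) :
    Real.exp u ≤ 1 + u + 3/4 * u^2 := by
  have h := Real.exp_bound hu (by norm_num : 0 < 2)
  have hsum : ∑ i ∈ Finset.range 2, u^i / i.factorial = 1 + u := by
    simp [Finset.sum_range_succ]
  rw [hsum] at h
  have h3 : |u|^2 = u^2 := sq_abs u
  rw [h3] at h
  norm_num [Nat.factorial] at h
  have := abs_le.mp h
  linarith [this.2]

set_option maxHeartbeats 1000000 in
theorem stmt_5 {X : Type*} [Fintype X] [Nonempty X] [DecidableEq X]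
    (P : Matrix X X ℝ) (μ : X → ℝ)
    (hPnonneg : ∀ x y, 0 ≤ P x y)
    (hProw : ∀ x, ∑ y, P x y = 1)
    (hμpos : ∀ x, 0 ≤ μ x) (hμsum : ∑ x, μ x = 1)
    (hrev : ∀ x y, μ x * P x y = μ y * P y x)
    (hirr : ∀ x y : X, ∃ t : ℕ, 0 < t ∧ 0 < (P ^ t) x y)
    (lam : ℝ) (hlam : 0 < lam)
    (hPoincare : ∀ f : X → ℝ,
      lam * (∑ x, μ x * (f x - ∑ y, μ y * f y) ^ 2) ≤
        (1 / 2) * ∑ x, ∑ y, (f x - f y) ^ 2 * μ x * P x y)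
    (F : X → ℝ)
    (hF : (1 / 2) * (⨆ x, ∑ y, |F x - F y| ^ 2 * P x y) ≤ 1)
    (r : ℝ) (hr : 0 ≤ r) :
    ∑ x ∈ univ.filter (fun x => (∑ y, μ y * F y) + r ≤ F x), μ x ≤
      3 * Real.exp (-r * Real.sqrt lam / 2) := by
  set m : ℝ := ∑ y, μ y * F y with hm
  set Λ : ℝ → ℝ := fun t => ∑ x, μ x * Real.exp (t * F x) with hΛ
  have hΛt : ∀ u, Λ u = ∑ x, μ x * Real.exp (u * F x) := fun u => by rw [hΛ]
  -- triple norm bound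
  have htriple : ∀ x, ∑ y, (F x - F y)^2 * P x y ≤ 2 := by
    intro x
    have hb : BddAbove (Set.range fun x => ∑ y, |F x - F y| ^ 2 * P x y) :=
      Set.Finite.bddAbove (Set.finite_range _)
    have h1 : (∑ y, |F x - F y| ^ 2 * P x y) ≤ ⨆ x, ∑ y, |F x - F y| ^ 2 * P x y :=
      le_ciSup hb x
    have h2 : (∑ y, |F x - F y| ^ 2 * P x y) = ∑ y, (F x - F y)^2 * P x y := by
      refine Finset.sum_congr rfl fun y _ => ?_
      rw [sq_abs]
    linarith [h2 ▸ h1]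
  -- positivity of Λ
  have hΛpos : ∀ t, 0 < Λ t := by
    intro t
    obtain ⟨x0, hx0⟩ : ∃ x, 0 < μ x := by
      by_contra hc
      push_neg at hc
      have : ∑ x, μ x = 0 := Finset.sum_eq_zero fun x _ => le_antisymm (hc x) (hμpos x)
      rw [hμsum] at this; norm_num at this
    have h1 : μ x0 * Real.exp (t * F x0) ≤ Λ t := by
      rw [hΛt]
      exact Finset.single_le_sum (f := fun x => μ x * Real.exp (t * F x))
        (fun x _ => mul_nonneg (hμpos x) (Real.exp_pos _).le) (Finset.mem_univ x0)
    have := mul_pos hx0 (Real.exp_pos (t * F x0))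
    linarith
  -- key recursion inequality
  have key : ∀ t : ℝ, lam * (Λ t - (Λ (t/2))^2) ≤ t^2/2 * Λ t := by
    intro t
    set f : X → ℝ := fun x => Real.exp (t/2 * F x) with hf
    have hfm : (∑ y, μ y * f y) = Λ (t/2) := rfl
    have hfsq : ∀ x, f x ^ 2 = Real.exp (t * F x) := by
      intro x
      rw [hf]
      rw [sq, ← Real.exp_add]
      ring_nf
    -- variance identity
    have hvar : (∑ x, μ x * (f x - ∑ y, μ y * f y) ^ 2) = Λ t - (Λ (t/2))^2 := by
      rw [hfm]
      have expand : ∀ x ∈ univ, μ x * (f x - Λ (t/2)) ^ 2 =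
          μ x * Real.exp (t * F x) - 2 * Λ (t/2) * (μ x * f x) + Λ (t/2)^2 * μ x := by
        intro x _
        have : μ x * (f x - Λ (t/2)) ^ 2 =
            μ x * f x ^ 2 - 2 * Λ (t/2) * (μ x * f x) + Λ (t/2)^2 * μ x := by ring
        rw [this, hfsq]
      rw [Finset.sum_congr rfl expand]
      rw [Finset.sum_add_distrib, Finset.sum_sub_distrib, ← Finset.mul_sum, ← Finset.mul_sum,
        hμsum, hfm]
      ring
    -- Dirichlet form bound
    have hdir : (1 / 2) * ∑ x, ∑ y, (f x - f y) ^ 2 * μ x * P x y ≤ t^2/2 * Λ t := by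
      set S1 : ℝ := ∑ x, ∑ y, t^2*(F x - F y)^2/4 * Real.exp (t*F x) * μ x * P x y with hS1
      set S2 : ℝ := ∑ x, ∑ y, t^2*(F x - F y)^2/4 * Real.exp (t*F y) * μ x * P x y with hS2
      have hpt : ∀ x y, (f x - f y)^2 * μ x * P x y ≤
          (t^2*(F x - F y)^2/4 * Real.exp (t*F x)
            + t^2*(F x - F y)^2/4 * Real.exp (t*F y)) * μ x * P x y := by
        intro x y
        have hms : 0 ≤ μ x * P x y := mul_nonneg (hμpos x) (hPnonneg x y)
        have hfx : f x = Real.exp (t * F x / 2) := by rw [hf]; ring_nf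
        have hfy : f y = Real.exp (t * F y / 2) := by rw [hf]; ring_nf
        have h2 : (f x - f y)^2 ≤ t^2*(F x - F y)^2/4 * Real.exp (t*F x)
            + t^2*(F x - F y)^2/4 * Real.exp (t*F y) := by
          rw [hfx, hfy]
          calc (Real.exp (t * F x / 2) - Real.exp (t * F y / 2))^2
              ≤ (t*F x - t*F y)^2/4 * (Real.exp (t*F x) + Real.exp (t*F y)) :=
                exp_sq_ineq (t*F x) (t*F y)
            _ = t^2*(F x - F y)^2/4 * Real.exp (t*F x)
                + t^2*(F x - F y)^2/4 * Real.exp (t*F y) := by ring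
        calc (f x - f y)^2 * μ x * P x y = (f x - f y)^2 * (μ x * P x y) := by ring
          _ ≤ (t^2*(F x - F y)^2/4 * Real.exp (t*F x)
                + t^2*(F x - F y)^2/4 * Real.exp (t*F y)) * (μ x * P x y) :=
              mul_le_mul_of_nonneg_right h2 hms
          _ = _ := by ring
      have hbound : ∑ x, ∑ y, (f x - f y) ^ 2 * μ x * P x y ≤ S1 + S2 := by
        have hcomb : ∑ x, ∑ y, (t^2*(F x - F y)^2/4 * Real.exp (t*F x)
            + t^2*(F x - F y)^2/4 * Real.exp (t*F y)) * μ x * P x y = S1 + S2 := by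
          rw [hS1, hS2, ← Finset.sum_add_distrib]
          refine Finset.sum_congr rfl fun x _ => ?_
          rw [← Finset.sum_add_distrib]
          refine Finset.sum_congr rfl fun y _ => by ring
        rw [← hcomb]
        exact Finset.sum_le_sum fun x _ => Finset.sum_le_sum fun y _ => hpt x y
      have hS21 : S2 = S1 := by
        calc S2 = ∑ y, ∑ x, t^2*(F x - F y)^2/4 * Real.exp (t*F y) * μ x * P x y :=
            Finset.sum_comm
          _ = ∑ y, ∑ x, t^2*(F y - F x)^2/4 * Real.exp (t*F y) * μ y * P y x := by
            refine Finset.sum_congr rfl fun y _ => Finset.sum_congr rfl fun x _ => ?_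
            linear_combination (t^2*(F x - F y)^2/4 * Real.exp (t*F y)) * hrev x y
          _ = S1 := rfl
      have hS1le : S1 ≤ t^2/2 * Λ t := by
        have hinner : ∀ x, ∑ y, t^2*(F x - F y)^2/4 * Real.exp (t*F x) * μ x * P x y
            = t^2/4 * Real.exp (t*F x) * μ x * ∑ y, (F x - F y)^2 * P x y := by
          intro x
          rw [Finset.mul_sum]
          exact Finset.sum_congr rfl fun y _ => by ring
        have e1 : S1 = ∑ x, t^2/4 * Real.exp (t*F x) * μ x * ∑ y, (F x - F y)^2 * P x y :=
          Finset.sum_congr rfl fun x _ => hinner x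
        have e2 : (∑ x, t^2/4 * Real.exp (t*F x) * μ x * 2) = t^2/2 * Λ t := by
          rw [hΛt t, Finset.mul_sum]
          exact Finset.sum_congr rfl fun x _ => by ring
        rw [e1, ← e2]
        refine Finset.sum_le_sum fun x _ => ?_
        refine mul_le_mul_of_nonneg_left (htriple x) ?_
        have := (Real.exp_pos (t * F x)).le
        have := hμpos x
        positivity
      linarith
    have := hPoincare f
    rw [hvar] at this
    linarith
  -- set up G and s
  set s : ℝ := Real.sqrt lam / 2 with hs
  set G : ℝ → ℝ := fun u => Real.exp (-(u*m)) * Λ u with hG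
  have hGt : ∀ u, G u = Real.exp (-(u*m)) * Λ u := fun u => by rw [hG]
  have hGpos : ∀ t, 0 < G t := fun t => by
    rw [hGt]; exact mul_pos (Real.exp_pos _) (hΛpos t)
  have hs0 : 0 ≤ s := by rw [hs]; positivity
  have hs2 : s^2 = lam/4 := by
    rw [hs, div_pow, Real.sq_sqrt hlam.le]; norm_num
  have hstep : ∀ t : ℝ, t^2 ≤ lam → G t ≤ Real.exp (t^2/lam) * (G (t/2))^2 := by
    intro t ht
    set θ : ℝ := t^2/(2*lam) with hθdef
    have hθ0 : 0 ≤ θ := by positivity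
    have hθhalf : θ ≤ 1/2 := by
      rw [hθdef, div_le_iff₀ (by positivity)]; linarith
    have h3 : lam * (θ * Λ t) = t^2/2 * Λ t := by
      rw [hθdef]; field_simp
    have h4 : lam * (Λ t - (Λ (t/2))^2) ≤ lam * (θ * Λ t) := by
      rw [h3]; exact key t
    have h5 : Λ t - (Λ (t/2))^2 ≤ θ * Λ t := le_of_mul_le_mul_left h4 hlam
    have h1 : Λ t * (1-θ) ≤ (Λ (t/2))^2 := by nlinarith [h5]
    have hexp : 2*θ + 1 ≤ Real.exp (2*θ) := Real.add_one_le_exp _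
    have h6 : 1 ≤ Real.exp (2*θ) * (1-θ) := by nlinarith
    have h7 : Λ t ≤ Real.exp (2*θ) * (Λ (t/2))^2 :=
      calc Λ t = Λ t * 1 := (mul_one _).symm
        _ ≤ Λ t * (Real.exp (2*θ) * (1-θ)) := mul_le_mul_of_nonneg_left h6 (hΛpos t).le
        _ = Real.exp (2*θ) * (Λ t * (1-θ)) := by ring
        _ ≤ Real.exp (2*θ) * (Λ (t/2))^2 :=
            mul_le_mul_of_nonneg_left h1 (Real.exp_pos _).le
    have h9 : (G (t/2))^2 = Real.exp (-(t*m)) * (Λ (t/2))^2 := by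
      rw [hGt]
      have : Real.exp (-(t/2*m)) ^ 2 = Real.exp (-(t*m)) := by
        rw [sq, ← Real.exp_add]; congr 1; ring
      rw [mul_pow, this]
    have h2θ : 2*θ = t^2/lam := by rw [hθdef]; field_simp
    calc G t = Real.exp (-(t*m)) * Λ t := hGt t
      _ ≤ Real.exp (-(t*m)) * (Real.exp (2*θ) * (Λ (t/2))^2) :=
          mul_le_mul_of_nonneg_left h7 (Real.exp_pos _).le
      _ = Real.exp (2*θ) * (Real.exp (-(t*m)) * (Λ (t/2))^2) := by ring
      _ = Real.exp (t^2/lam) * (G (t/2))^2 := by rw [h2θ, h9]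
  -- iterated inequality
  have hiter : ∀ n : ℕ, G s ≤ Real.exp (1/2) * (G (s/2^n))^(2^n) := by
    have hiter' : ∀ n : ℕ,
        G s ≤ Real.exp (∑ k ∈ Finset.range n, (1/4:ℝ) * (1/2)^k) * (G (s/2^n))^(2^n) := by
      intro n
      induction n with
      | zero => simp
      | succ n ih =>
        have ht2 : (s/2^n)^2 ≤ lam := by
          have h1 : (s/2^n)^2 = s^2 / ((2:ℝ)^n)^2 := by rw [div_pow]
          have h2a : (1:ℝ) ≤ (2:ℝ)^n := one_le_pow₀ (by norm_num)
          have h2 : (1:ℝ) ≤ ((2:ℝ)^n)^2 := one_le_pow₀ h2a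
          have h3 : s^2 / ((2:ℝ)^n)^2 ≤ s^2 := by
            apply div_le_self (by positivity) h2
          rw [h1]; nlinarith
        have hstepn := hstep (s/2^n) ht2
        have hhalf : (s/2^n)/2 = s/2^(n+1) := by rw [pow_succ]; ring
        rw [hhalf] at hstepn
        have hpow : (G (s/2^n))^(2^n) ≤
            (Real.exp ((s/2^n)^2/lam) * (G (s/2^(n+1)))^2)^(2^n) :=
          pow_le_pow_left₀ (hGpos _).le hstepn _
        have hexp2 : (Real.exp ((s/2^n)^2/lam))^(2^n) = Real.exp ((1/4:ℝ) * (1/2)^n) := by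
          rw [← Real.exp_nat_mul]
          congr 1
          have h2n : ((2:ℝ)^n) ≠ 0 := by positivity
          have hcast : ((2^n : ℕ) : ℝ) = (2:ℝ)^n := by push_cast; ring
          rw [hcast, div_pow, hs2]
          field_simp
          ring
          rw [← mul_pow]; norm_num
        have hGpow : ((G (s/2^(n+1)))^2)^(2^n) = (G (s/2^(n+1)))^(2^(n+1)) := by
          rw [← pow_mul]
          congr 1
          rw [pow_succ]
          ring
        calc G s ≤ Real.exp (∑ k ∈ Finset.range n, (1/4:ℝ) * (1/2)^k) * (G (s/2^n))^(2^n) := ih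
          _ ≤ Real.exp (∑ k ∈ Finset.range n, (1/4:ℝ) * (1/2)^k) *
              ((Real.exp ((s/2^n)^2/lam) * (G (s/2^(n+1)))^2)^(2^n)) :=
              mul_le_mul_of_nonneg_left hpow (Real.exp_pos _).le
          _ = Real.exp (∑ k ∈ Finset.range (n+1), (1/4:ℝ) * (1/2)^k)
              * (G (s/2^(n+1)))^(2^(n+1)) := by
              rw [mul_pow, hexp2, hGpow, Finset.sum_range_succ, Real.exp_add]
              ring
    intro n
    have hsum : (∑ k ∈ Finset.range n, (1/4:ℝ) * (1/2)^k) ≤ 1/2 := by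
      rw [← Finset.mul_sum]
      have := sum_geometric_two_le n
      linarith
    calc G s ≤ Real.exp (∑ k ∈ Finset.range n, (1/4:ℝ) * (1/2)^k) * (G (s/2^n))^(2^n) :=
        hiter' n
      _ ≤ Real.exp (1/2) * (G (s/2^n))^(2^n) :=
          mul_le_mul_of_nonneg_right (Real.exp_le_exp.2 hsum) (pow_nonneg (hGpos _).le _)
  -- small-t bound on G
  set B : ℝ := 1 + ∑ x, |F x - m| with hBdef
  have hB0 : 0 < B := by
    have : 0 ≤ ∑ x, |F x - m| := Finset.sum_nonneg fun x _ => abs_nonneg _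
    rw [hBdef]; linarith
  have hBx : ∀ x, |F x - m| ≤ B := by
    intro x
    have h1 : |F x - m| ≤ ∑ x, |F x - m| :=
      Finset.single_le_sum (f := fun i => |F i - m|) (fun i _ => abs_nonneg (F i - m))
        (Finset.mem_univ x)
    rw [hBdef]; linarith
  set V : ℝ := ∑ x, μ x * (F x - m)^2 with hVdef
  have hV0 : 0 ≤ V := Finset.sum_nonneg fun x _ => mul_nonneg (hμpos x) (sq_nonneg _)
  have hsmall : ∀ t : ℝ, 0 ≤ t → t * B ≤ 1 → G t ≤ Real.exp (3/4 * V * t^2) := by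
    intro t ht htB
    have hGsum : G t = ∑ x, μ x * Real.exp (t * (F x - m)) := by
      rw [hGt, hΛt, Finset.mul_sum]
      refine Finset.sum_congr rfl fun x _ => ?_
      have he : Real.exp (-(t*m)) * Real.exp (t * F x) = Real.exp (t * (F x - m)) := by
        rw [← Real.exp_add]; congr 1; ring
      linear_combination (μ x) * he
    have hterm : ∀ x ∈ univ, μ x * Real.exp (t * (F x - m)) ≤
        μ x * (1 + t*(F x - m) + 3/4 * (t*(F x - m))^2) := by
      intro x _
      refine mul_le_mul_of_nonneg_left ?_ (hμpos x)
      refine exp_quadratic_bound _ ?_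
      rw [abs_mul, abs_of_nonneg ht]
      calc t * |F x - m| ≤ t * B := mul_le_mul_of_nonneg_left (hBx x) ht
        _ ≤ 1 := htB
    have hzero : ∑ x, μ x * (F x - m) = 0 := by
      have he : ∑ x, μ x * (F x - m) = (∑ x, μ x * F x) - m * ∑ x, μ x := by
        rw [Finset.mul_sum, ← Finset.sum_sub_distrib]
        exact Finset.sum_congr rfl fun x _ => by ring
      rw [he, hμsum, ← hm]
      ring
    have hsum1 : ∑ x, μ x * (1 + t*(F x - m) + 3/4 * (t*(F x - m))^2)
        = 1 + 3/4 * V * t^2 := by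
      have e : ∀ x ∈ univ, μ x * (1 + t*(F x - m) + 3/4 * (t*(F x - m))^2)
          = μ x + t * (μ x * (F x - m)) + 3/4 * t^2 * (μ x * (F x - m)^2) := fun x _ => by ring
      rw [Finset.sum_congr rfl e, Finset.sum_add_distrib, Finset.sum_add_distrib,
        ← Finset.mul_sum, ← Finset.mul_sum, hμsum, hzero, ← hVdef]
      ring
    have h1 : G t ≤ 1 + 3/4 * V * t^2 := by
      rw [hGsum, ← hsum1]; exact Finset.sum_le_sum hterm
    have h2 : (3/4 * V * t^2) + 1 ≤ Real.exp (3/4 * V * t^2) := Real.add_one_le_exp _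
    linarith
  -- pass to the limit
  have hGs : G s ≤ Real.exp (1/2) := by
    have hs2n : Filter.Tendsto (fun n : ℕ => s * (1/2:ℝ)^n) Filter.atTop (nhds 0) := by
      simpa using (tendsto_pow_atTop_nhds_zero_of_lt_one (by norm_num : (0:ℝ) ≤ 1/2)
        (by norm_num : (1/2:ℝ) < 1)).const_mul s
    have hevB : ∀ᶠ n : ℕ in Filter.atTop, s * (1/2:ℝ)^n * B ≤ 1 := by
      have := hs2n.eventually (eventually_le_nhds (show (0:ℝ) < 1/B by positivity))
      filter_upwards [this] with n hn
      calc s * (1/2:ℝ)^n * B ≤ 1/B * B := mul_le_mul_of_nonneg_right hn hB0.le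
        _ = 1 := by field_simp
    have hdiv : ∀ n : ℕ, s / 2^n = s * (1/2:ℝ)^n := fun n => by
      rw [div_eq_mul_inv, ← inv_pow, one_div]
    have hGsev : ∀ᶠ n : ℕ in Filter.atTop,
        G s ≤ Real.exp (1/2) * Real.exp (3/4 * V * s^2 * (1/2:ℝ)^n) := by
      filter_upwards [hevB] with n hn
      have h0 : 0 ≤ s / 2^n := by positivity
      have h1 : G (s/2^n) ≤ Real.exp (3/4 * V * (s/2^n)^2) := by
        apply hsmall _ h0
        rw [hdiv n]; exact hn
      have h2 : (G (s/2^n))^(2^n) ≤ (Real.exp (3/4 * V * (s/2^n)^2))^(2^n) :=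
        pow_le_pow_left₀ (hGpos _).le h1 _
      have h3 : (Real.exp (3/4 * V * (s/2^n)^2))^(2^n)
          = Real.exp (3/4 * V * s^2 * (1/2:ℝ)^n) := by
        rw [← Real.exp_nat_mul]
        congr 1
        have hcast : ((2^n : ℕ) : ℝ) = (2:ℝ)^n := by push_cast; ring
        rw [hcast, div_pow]
        field_simp
        ring
        rw [mul_assoc (V * s ^ 2), ← mul_pow]; norm_num
      calc G s ≤ Real.exp (1/2) * (G (s/2^n))^(2^n) := hiter n
        _ ≤ Real.exp (1/2) * Real.exp (3/4 * V * s^2 * (1/2:ℝ)^n) :=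
            mul_le_mul_of_nonneg_left (h2.trans_eq h3) (Real.exp_pos _).le
    have h0 : Filter.Tendsto (fun n : ℕ => 3/4 * V * s^2 * (1/2:ℝ)^n) Filter.atTop (nhds 0) := by
      simpa using (tendsto_pow_atTop_nhds_zero_of_lt_one (by norm_num : (0:ℝ) ≤ 1/2)
        (by norm_num : (1/2:ℝ) < 1)).const_mul (3/4 * V * s^2)
    have h1 : Filter.Tendsto (fun n : ℕ => Real.exp (1/2) * Real.exp (3/4 * V * s^2 * (1/2:ℝ)^n))
        Filter.atTop (nhds (Real.exp (1/2))) := by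
      have h2 := (Real.continuous_exp.tendsto 0).comp h0
      have h3 := h2.const_mul (Real.exp (1/2 : ℝ))
      simpa using h3
    exact ge_of_tendsto h1 hGsev
  -- Markov inequality
  have hfinal : ∑ x ∈ univ.filter (fun x => m + r ≤ F x), μ x ≤ Real.exp (-(s*r)) * G s := by
    have hsumeq : Real.exp (-(s*r)) * G s = ∑ x, μ x * Real.exp (s * (F x - m - r)) := by
      rw [hGt, hΛt, Finset.mul_sum, Finset.mul_sum]
      refine Finset.sum_congr rfl fun x _ => ?_
      have he : Real.exp (-(s*r)) * (Real.exp (-(s*m)) * Real.exp (s * F x))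
          = Real.exp (s * (F x - m - r)) := by
        rw [← Real.exp_add, ← Real.exp_add]; congr 1; ring
      linear_combination (μ x) * he
    rw [hsumeq]
    calc ∑ x ∈ univ.filter (fun x => m + r ≤ F x), μ x
        ≤ ∑ x ∈ univ.filter (fun x => m + r ≤ F x), μ x * Real.exp (s * (F x - m - r)) := by
          refine Finset.sum_le_sum fun x hx => ?_
          have hx' := (Finset.mem_filter.mp hx).2
          have h1 : 1 ≤ Real.exp (s * (F x - m - r)) :=
            Real.one_le_exp (mul_nonneg hs0 (by linarith))
          nlinarith [hμpos x]
      _ ≤ ∑ x, μ x * Real.exp (s * (F x - m - r)) :=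
          Finset.sum_le_sum_of_subset_of_nonneg (Finset.filter_subset _ _)
            (fun x _ _ => mul_nonneg (hμpos x) (Real.exp_pos _).le)
  have hexp3 : Real.exp (1/2 : ℝ) ≤ 3 := by
    have he : Real.exp (1/2:ℝ) * Real.exp (1/2:ℝ) = Real.exp 1 := by
      rw [← Real.exp_add]; norm_num
    nlinarith [Real.exp_one_lt_d9, Real.exp_pos (1/2:ℝ)]
  have harg : -(s*r) = -r * Real.sqrt lam / 2 := by rw [hs]; ring
  calc ∑ x ∈ univ.filter (fun x => m + r ≤ F x), μ x
      ≤ Real.exp (-(s*r)) * G s := hfinal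
    _ ≤ Real.exp (-(s*r)) * Real.exp (1/2) :=
        mul_le_mul_of_nonneg_left hGs (Real.exp_pos _).le
    _ ≤ Real.exp (-(s*r)) * 3 :=
        mul_le_mul_of_nonneg_left hexp3 (Real.exp_pos _).le
    _ = 3 * Real.exp (-r * Real.sqrt lam / 2) := by rw [harg, mul_comm]
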